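/- Fix constants κ > 0, s_0 > 1, C_0 > 0, β > 2, and set f̄(r) = 1 + C_0 r^{−β/2}. Define for τ ≥ s_0 the function φ(τ) = ∫_{s_0}^τ ( t^{−κ} ( ∫_{s_0}^t κ r^{κ−1} f̄(r) dr + H ) )^{1/k} dt with a parameter H > 0. Then φ'(τ) > 0 for all τ > s_0, and there exists H̃ > 0 depending only on C_0, s_0, κ, β such that φ''(τ) < 0 for all τ > s_0 whenever H ≥ H̃. -/

import Mathlib

open intervalIntegral

noncomputable def phiBar (κ s0 C0 β : ℝ) (k : ℕ) (H : ℝ) (τ : ℝ) : ℝ :=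
  ∫ t in s0..τ,
    (t ^ (-κ) * ((∫ r in s0..t, κ * r ^ (κ - 1) * (1 + C0 * r ^ (-(β/2)))) + H))
      ^ ((1:ℝ)/k)

/-- the constructed radial profile `φ` has `φ' > 0`, and `φ'' < 0`
once the parameter `H` is sufficiently large. -/
theorem stmt9 (κ s0 C0 β : ℝ) (k : ℕ) (hκ : 0 < κ) (hs0 : 1 < s0)
    (hC0 : 0 < C0) (hβ : 2 < β) (hk : 1 ≤ k) :
    (∀ H > (0:ℝ), ∀ τ > s0, 0 < deriv (phiBar κ s0 C0 β k H) τ) ∧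
    ∃ Htilde > (0:ℝ), ∀ H ≥ Htilde, ∀ τ > s0,
      deriv (deriv (phiBar κ s0 C0 β k H)) τ < 0 := by
  have hk0 : (0:ℝ) < (k:ℝ) := by exact_mod_cast lt_of_lt_of_le Nat.one_pos hk
  set c : ℝ := (1:ℝ)/(k:ℝ) with hc_def
  have hc : 0 < c := by positivity
  set h : ℝ → ℝ := fun r => κ * r ^ (κ - 1) * (1 + C0 * r ^ (-(β/2))) with hh_def
  set F : ℝ → ℝ := fun t => ∫ r in s0..t, h r with hF_def
  -- continuity of h on positive reals
  have hcontAt : ∀ r : ℝ, 0 < r → ContinuousAt h r := by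
    intro r hr
    exact (continuousAt_const.mul
        (Real.continuousAt_rpow_const r (κ-1) (Or.inl hr.ne'))).mul
      (continuousAt_const.add (continuousAt_const.mul
        (Real.continuousAt_rpow_const r (-(β/2)) (Or.inl hr.ne'))))
  have hcontOn : ContinuousOn h (Set.Ioi (0:ℝ)) :=
    continuousOn_of_forall_continuousAt (fun r hr => hcontAt r hr)
  have hs0pos : (0:ℝ) < s0 := by linarith
  have hIntH : ∀ t : ℝ, 0 < t → IntervalIntegrable h MeasureTheory.volume s0 t := by
    intro t ht
    apply (hcontOn.mono ?_).intervalIntegrable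
    intro x hx
    have := hx.1
    simp only [Set.mem_Ioi]
    rcases le_total s0 t with h' | h'
    · have := Set.uIcc_of_le h' ▸ hx
      exact lt_of_lt_of_le hs0pos this.1
    · have := Set.uIcc_of_ge h' ▸ hx
      exact lt_of_lt_of_le ht this.1
  have hFderiv : ∀ t : ℝ, 0 < t → HasDerivAt F (h t) t := by
    intro t ht
    exact intervalIntegral.integral_hasDerivAt_right (hIntH t ht)
      (ContinuousAt.stronglyMeasurableAtFilter isOpen_Ioi
        (fun x hx => hcontAt x hx) t ht) (hcontAt t ht)
  have hFnonneg : ∀ τ : ℝ, s0 ≤ τ → 0 ≤ F τ := by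
    intro τ hτ
    apply intervalIntegral.integral_nonneg hτ
    intro r hr
    have hr0 : 0 < r := lt_of_lt_of_le hs0pos hr.1
    have h1 : (0:ℝ) ≤ r ^ (κ - 1) := Real.rpow_nonneg hr0.le _
    have h2 : (0:ℝ) ≤ r ^ (-(β/2)) := Real.rpow_nonneg hr0.le _
    have : (0:ℝ) ≤ 1 + C0 * r ^ (-(β/2)) := by positivity
    positivity
  -- the derivative of phiBar
  have main : ∀ H : ℝ, 0 < H → ∀ τ : ℝ, 0 < τ →
      HasDerivAt (phiBar κ s0 C0 β k H) ((τ ^ (-κ) * (F τ + H)) ^ c) τ := by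
    intro H hH τ hτ
    have hgcont : ∀ t : ℝ, 0 < t →
        ContinuousAt (fun t : ℝ => (t ^ (-κ) * (F t + H)) ^ c) t := by
      intro t ht
      have h1 : ContinuousAt (fun t : ℝ => t ^ (-κ) * (F t + H)) t :=
        (Real.continuousAt_rpow_const t (-κ) (Or.inl ht.ne')).mul
          ((hFderiv t ht).continuousAt.add continuousAt_const)
      exact (Real.continuousAt_rpow_const _ c (Or.inr hc.le)).comp h1
    have hgOn : ContinuousOn (fun t : ℝ => (t ^ (-κ) * (F t + H)) ^ c) (Set.Ioi (0:ℝ)) :=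
      continuousOn_of_forall_continuousAt (fun t ht => hgcont t ht)
    have hint : IntervalIntegrable (fun t : ℝ => (t ^ (-κ) * (F t + H)) ^ c)
        MeasureTheory.volume s0 τ := by
      apply (hgOn.mono ?_).intervalIntegrable
      intro x hx
      simp only [Set.mem_Ioi]
      rcases le_total s0 τ with h' | h'
      · have := Set.uIcc_of_le h' ▸ hx
        exact lt_of_lt_of_le hs0pos this.1
      · have := Set.uIcc_of_ge h' ▸ hx
        exact lt_of_lt_of_le hτ this.1
    have := intervalIntegral.integral_hasDerivAt_right hint
      (ContinuousAt.stronglyMeasurableAtFilter isOpen_Ioi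
        (fun x hx => hgcont x hx) τ hτ) (hgcont τ hτ)
    exact this
  have hupos : ∀ H : ℝ, 0 < H → ∀ τ : ℝ, s0 < τ → 0 < τ ^ (-κ) * (F τ + H) := by
    intro H hH τ hτ
    have hτ0 : (0:ℝ) < τ := lt_trans hs0pos hτ
    have := hFnonneg τ hτ.le
    have h1 : (0:ℝ) < τ ^ (-κ) := Real.rpow_pos_of_pos hτ0 _
    nlinarith
  constructor
  · intro H hH τ hτ
    rw [(main H hH τ (lt_trans hs0pos hτ)).deriv]
    exact Real.rpow_pos_of_pos (hupos H hH τ hτ) _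
  · -- second derivative
    refine ⟨(1 + C0) * s0 ^ κ + 1, by positivity, ?_⟩
    intro H hHt τ hτ
    have hτ0 : (0:ℝ) < τ := lt_trans hs0pos hτ
    have hH : 0 < H := lt_of_lt_of_le (by positivity) hHt
    -- key bound : τ^κ * (1 + C0 τ^(-β/2)) < F τ + H
    have hfτ_le : ∀ r : ℝ, s0 ≤ r → r ≤ τ →
        1 + C0 * τ ^ (-(β/2)) ≤ 1 + C0 * r ^ (-(β/2)) := by
      intro r hr1 hr2
      have hr0 : 0 < r := lt_of_lt_of_le hs0pos hr1
      have := Real.rpow_le_rpow_of_nonpos hr0 hr2 (by linarith : -(β/2) ≤ 0)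
      nlinarith
    have hkey : τ ^ κ * (1 + C0 * τ ^ (-(β/2))) < F τ + H := by
      set fτ : ℝ := 1 + C0 * τ ^ (-(β/2)) with hfτ_def
      have hfτpos : 0 < fτ := by
        have : (0:ℝ) ≤ τ ^ (-(β/2)) := Real.rpow_nonneg hτ0.le _
        positivity
      have hstep1 : fτ * (τ ^ κ - s0 ^ κ) ≤ F τ := by
        have hInt1 : IntervalIntegrable (fun r : ℝ => κ * r ^ (κ-1) * fτ)
            MeasureTheory.volume s0 τ := by
          apply ContinuousOn.intervalIntegrable
          apply ContinuousOn.mul (ContinuousOn.mul continuousOn_const ?_) continuousOn_const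
          apply continuousOn_of_forall_continuousAt
          intro x hx
          have hx0 : 0 < x := by
            rw [Set.uIcc_of_le hτ.le] at hx
            exact lt_of_lt_of_le hs0pos hx.1
          exact Real.continuousAt_rpow_const x (κ-1) (Or.inl hx0.ne')
        have hmono : ∫ r in s0..τ, κ * r ^ (κ-1) * fτ ≤ F τ := by
          apply intervalIntegral.integral_mono_on hτ.le hInt1 (hIntH τ hτ0)
          intro r hr
          have hr0 : 0 < r := lt_of_lt_of_le hs0pos hr.1
          have h1 : (0:ℝ) ≤ κ * r ^ (κ-1) := by
            have := Real.rpow_nonneg hr0.le (κ-1); positivity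
          have h2 := hfτ_le r hr.1 hr.2
          simp only [hh_def]
          nlinarith
        have hcomp : ∫ r in s0..τ, κ * r ^ (κ-1) * fτ = fτ * (τ ^ κ - s0 ^ κ) := by
          have : ∫ r in s0..τ, κ * r ^ (κ-1) * fτ
              = (κ * fτ) * ∫ r in s0..τ, r ^ (κ-1) := by
            rw [← intervalIntegral.integral_const_mul]
            congr 1; ext r; ring
          rw [this, integral_rpow (Or.inl (by linarith))]
          have hκne : κ ≠ 0 := hκ.ne'
          field_simp
          ring_nf
          field_simp
        linarith [hcomp ▸ hmono]
      have hfτle : fτ ≤ 1 + C0 := by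
        have : τ ^ (-(β/2)) ≤ 1 :=
          Real.rpow_le_one_of_one_le_of_nonpos (by linarith) (by linarith)
        simp only [hfτ_def]
        nlinarith
      have hs0κ : (0:ℝ) < s0 ^ κ := Real.rpow_pos_of_pos hs0pos _
      have : τ ^ κ * fτ = fτ * (τ ^ κ - s0 ^ κ) + fτ * s0 ^ κ := by ring
      have hlast : fτ * s0 ^ κ ≤ (1 + C0) * s0 ^ κ := by nlinarith
      nlinarith [hstep1]
    -- compute the second derivative
    have hu : HasDerivAt (fun t : ℝ => t ^ (-κ) * (F t + H))
        ((-κ * τ ^ (-κ - 1)) * (F τ + H) + τ ^ (-κ) * h τ) τ := by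
      have h1 : HasDerivAt (fun t : ℝ => t ^ (-κ)) (-κ * τ ^ (-κ - 1)) τ :=
        Real.hasDerivAt_rpow_const (Or.inl hτ0.ne')
      have h2 : HasDerivAt (fun t : ℝ => F t + H) (h τ) τ :=
        (hFderiv τ hτ0).add_const H
      exact h1.mul h2
    have huτpos := hupos H hH τ hτ
    have hg' : HasDerivAt (fun t : ℝ => (t ^ (-κ) * (F t + H)) ^ c)
        (((-κ * τ ^ (-κ - 1)) * (F τ + H) + τ ^ (-κ) * h τ) * c
          * (τ ^ (-κ) * (F τ + H)) ^ (c - 1)) τ :=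
      hu.rpow_const (Or.inl huτpos.ne')
    -- identify deriv (deriv phiBar) with deriv of g
    have heq : deriv (phiBar κ s0 C0 β k H)
        =ᶠ[nhds τ] fun t : ℝ => (t ^ (-κ) * (F t + H)) ^ c := by
      filter_upwards [Ioi_mem_nhds hτ] with t ht
      exact (main H hH t (lt_trans hs0pos ht)).deriv
    rw [heq.deriv_eq, hg'.deriv]
    -- sign analysis
    have hneg : (-κ * τ ^ (-κ - 1)) * (F τ + H) + τ ^ (-κ) * h τ < 0 := by
      have t1 : τ ^ (-κ - 1) * τ ^ κ = τ ^ (-1:ℝ) := by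
        rw [← Real.rpow_add hτ0]; congr 1; ring
      have t2 : τ ^ (-κ) * τ ^ (κ - 1) = τ ^ (-1:ℝ) := by
        rw [← Real.rpow_add hτ0]; congr 1; ring
      have e1 : τ ^ (-κ) * h τ = κ * τ ^ (-κ - 1) * (τ ^ κ * (1 + C0 * τ ^ (-(β/2)))) := by
        simp only [hh_def]
        linear_combination (κ * (1 + C0 * τ ^ (-(β/2)))) * t2
          - (κ * (1 + C0 * τ ^ (-(β/2)))) * t1
      rw [e1]
      have h1 : (0:ℝ) < τ ^ (-κ - 1) := Real.rpow_pos_of_pos hτ0 _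
      nlinarith [mul_pos (mul_pos hκ h1) (sub_pos.mpr hkey)]
    have hpow : (0:ℝ) < (τ ^ (-κ) * (F τ + H)) ^ (c - 1) :=
      Real.rpow_pos_of_pos huτpos _
    nlinarith [mul_pos (mul_pos (neg_pos.mpr hneg) hc) hpow]
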